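/- Let S = (V,H) be a finite simplicial complex and let k ≥ 1. Then the lattice of flats of the k-truncation T_k(S) equals {X ∈ L(S) : no facet of T_k(S) is contained in X} ∪ {V}. -/

import Mathlib

open scoped Classical

variable {V : Type*}

/-- A (finite) simplicial complex on vertex set `V`: all singletons are faces and
faces are closed under taking subsets. -/
def IsSimplicialComplex [DecidableEq V] (H : Set (Finset V)) : Prop :=
  (∀ v : V, {v} ∈ H) ∧ ∀ X ∈ H, ∀ Y ⊆ X, Y ∈ H

/-- `F` is a flat of the complex with faces `H`. -/
def IsFlat [DecidableEq V] (H : Set (Finset V)) (F : Finset V) : Prop :=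
  ∀ I ∈ H, I ⊆ F → ∀ p ∉ F, insert p I ∈ H

/-- `X` is a facet (maximal face) of `H`. -/
def IsFacet (H : Set (Finset V)) (X : Finset V) : Prop :=
  X ∈ H ∧ ∀ Y ∈ H, X ⊆ Y → Y = X

/-- The `k`-truncation of the family of faces `H`. -/
def trunc (H : Set (Finset V)) (k : ℕ) : Set (Finset V) :=
  {X ∈ H | X.card ≤ k}

/-- `H` has dimension `d`: some face has `d+1` elements and all faces have at most `d+1`. -/
def HasDim (H : Set (Finset V)) (d : ℕ) : Prop :=
  (∃ X ∈ H, X.card = d + 1) ∧ ∀ X ∈ H, X.card ≤ d + 1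

/-- `H` is paving of dimension `d`: every `d`-subset is a face and the maximal face
cardinality is `d+1`. -/
def PavingDim (H : Set (Finset V)) (d : ℕ) : Prop :=
  (∀ X : Finset V, X.card = d → X ∈ H) ∧ (∃ X ∈ H, X.card = d + 1) ∧
    ∀ X ∈ H, X.card ≤ d + 1

/-- `X` is a transversal of the successive differences for a chain
`C 0 ⊆ C 1 ⊆ … ⊆ C k` in the family `F`, i.e. `X` enumerates as `x 0, …, x (k-1)`
with `x i ∈ C (i+1) \ C i`. -/
def Transversal [DecidableEq V] (F : Set (Finset V)) (X : Finset V) : Prop :=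
  ∃ (k : ℕ) (x : Fin k → V) (C : Fin (k + 1) → Finset V),
    Function.Injective x ∧
    X = Finset.image x Finset.univ ∧
    (∀ i, C i ∈ F) ∧
    (∀ i : Fin k, C i.castSucc ⊆ C i.succ) ∧
    (∀ i : Fin k, x i ∈ C i.succ ∧ x i ∉ C i.castSucc)

/-- The set of all transversals of the successive differences for chains in `F`. -/
def Tr [DecidableEq V] (F : Set (Finset V)) : Set (Finset V) :=
  {X | Transversal F X}

/-- `H` is boolean representable: its faces are exactly the transversals of the
successive differences for chains in its lattice of flats. -/
def BooleanRepresentable [DecidableEq V] (H : Set (Finset V)) : Prop :=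
  H = Tr {F | IsFlat H F}

/-- The family `ε(S)` for a complex of dimension `d`. -/
def eps [DecidableEq V] (H : Set (Finset V)) (d : ℕ) : Set (Finset V) :=
  {X | ∀ Y ∈ H, Y ⊆ X → Y.card ≤ d → ∀ p ∉ X, insert p Y ∈ H}

/-- `H` is a truncated boolean representable simplicial complex. -/
def IsTBRSC [DecidableEq V] (H : Set (Finset V)) : Prop :=
  ∃ (H' : Set (Finset V)) (k : ℕ), 1 ≤ k ∧ IsSimplicialComplex H' ∧
    BooleanRepresentable H' ∧ H = trunc H' k

/-- The complex `B_d(V,L)`. -/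
def Bd [DecidableEq V] (d : ℕ) (L : Finset V) : Set (Finset V) :=
  {X | X.card ≤ d} ∪ {X | X.card = d + 1 ∧ (X ∩ L).card = d}

/-- The closure of `X`: the intersection of all flats containing `X`. -/
noncomputable def cl [Fintype V] [DecidableEq V] (H : Set (Finset V)) (X : Finset V) :
    Finset V :=
  Finset.univ.filter fun v => ∀ F : Finset V, IsFlat H F → X ⊆ F → v ∈ F

/-- `H` is a near-matroid. -/
def NearMatroid [Fintype V] [DecidableEq V] (H : Set (Finset V)) : Prop :=
  ∀ X ∈ H, ∀ Y ∈ H, cl H X = cl H Y → cl H X ≠ Finset.univ → X.card = Y.card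

/-- `H` is a matroid: a simplicial complex with the exchange property. -/
def IsMatroid [DecidableEq V] (H : Set (Finset V)) : Prop :=
  IsSimplicialComplex H ∧
    ∀ I ∈ H, ∀ J ∈ H, I.card = J.card + 1 → ∃ i ∈ I, i ∉ J ∧ insert i J ∈ H

theorem stmt_0 [Fintype V] [DecidableEq V] [Nonempty V]
    (H : Set (Finset V)) (hS : IsSimplicialComplex H) (k : ℕ) (hk : 1 ≤ k) :
    {F : Finset V | IsFlat (trunc H k) F} =
      {F : Finset V | IsFlat H F ∧ ∀ X : Finset V, IsFacet (trunc H k) X → ¬ X ⊆ F}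
        ∪ {Finset.univ} := by
  ext F
  simp only [Set.mem_setOf_eq, Set.mem_union, Set.mem_singleton_iff]
  constructor
  · intro hF
    by_cases hFu : F = Finset.univ
    · exact Or.inr hFu
    left
    obtain ⟨p, hp⟩ : ∃ p, p ∉ F := by
      by_contra h
      push_neg at h
      exact hFu (Finset.eq_univ_iff_forall.mpr h)
    have hsmall : ∀ I ∈ H, I ⊆ F → I.card < k := by
      intro I hI hIF
      by_contra h
      push_neg at h
      obtain ⟨J, hJI, hJcard⟩ := Finset.exists_subset_card_eq h
      have hJ : J ∈ trunc H k := ⟨hS.2 I hI J hJI, hJcard.le⟩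
      have h2 := hF J hJ (hJI.trans hIF) p hp
      have hpJ : p ∉ J := fun hpJ => hp (hIF (hJI hpJ))
      have := h2.2
      rw [Finset.card_insert_of_notMem hpJ, hJcard] at this
      omega
    constructor
    · intro I hI hIF q hq
      have hIk : I ∈ trunc H k := ⟨hI, (hsmall I hI hIF).le⟩
      exact (hF I hIk hIF q hq).1
    · intro X hX hXF
      have h2 := hF X hX.1 hXF p hp
      have := hX.2 _ h2 (Finset.subset_insert p X)
      have hpX : p ∉ X := fun hpX => hp (hXF hpX)
      exact hpX (this ▸ Finset.mem_insert_self p X)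
  · rintro (⟨hflat, hfac⟩ | rfl)
    · intro I hI hIF q hq
      have hqI : q ∉ I := fun h => hq (hIF h)
      have hIns : insert q I ∈ H := hflat I hI.1 hIF q hq
      refine ⟨hIns, ?_⟩
      rw [Finset.card_insert_of_notMem hqI]
      rcases lt_or_eq_of_le hI.2 with h | h
      · omega
      · exfalso
        refine hfac I ⟨hI, fun Y hY hIY => ?_⟩ hIF
        exact (Finset.eq_of_subset_of_card_le hIY (h ▸ hY.2)).symm
    · intro I hI hIF q hq
      exact absurd (Finset.mem_univ q) hq
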